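/- arXiv:1804.06099 — 5 statements merged into one kernel-verified Lean document; each statement's English description precedes it below -/
import Mathlib

section
/- With S*(1) compact convex containing the origin, h its support function, and w ≠ 0 reachable, if c* is the optimal value of the dual problem (maximize c subject to c·h(λ) ≤ λᵀw and λᵀw > 0), then c*·h(λ) ≥ λᵀw for all λ ∈ ℝ^n. -/
open Matrix Pointwise

/-- Theorem 2: if `c*` is the optimal value of the dual problem
(maximize `c` subject to `c·h(λ) ≤ λᵀw`, `λᵀw > 0`), then
`c*·h(λ) ≥ λᵀw` for all `λ ∈ ℝⁿ`. -/
theorem dual_optimal_dominates {n : ℕ} (K : Set (Fin n → ℝ))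
    (hKc : IsCompact K) (hKconv : Convex ℝ K) (hK0 : (0 : Fin n → ℝ) ∈ K)
    (w : Fin n → ℝ) (hw : w ≠ 0)
    (c₀ : ℝ) (hc₀ : 0 < c₀) (hreach : w ∈ c₀ • K)
    (h : (Fin n → ℝ) → ℝ) (hdef : ∀ l, h l = sSup ((fun y => l ⬝ᵥ y) '' K))
    (cstar : ℝ)
    (hattain : ∃ lstar : Fin n → ℝ,
      0 ≤ cstar ∧ cstar * h lstar ≤ lstar ⬝ᵥ w ∧ 0 < lstar ⬝ᵥ w)
    (hopt : ∀ (c : ℝ) (l : Fin n → ℝ),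
      0 ≤ c → c * h l ≤ l ⬝ᵥ w → 0 < l ⬝ᵥ w → c ≤ cstar) :
    ∀ l : Fin n → ℝ, l ⬝ᵥ w ≤ cstar * h l := by
  obtain ⟨lstar, hcs0, -, -⟩ := hattain
  intro l
  -- h l ≥ 0
  have himg : IsCompact ((fun y => l ⬝ᵥ y) '' K) := by
    apply hKc.image
    exact by unfold dotProduct; exact continuous_finset_sum _ fun i _ => (continuous_const.mul (continuous_apply i))
  have hbdd : BddAbove ((fun y => l ⬝ᵥ y) '' K) := himg.bddAbove
  have hh0 : 0 ≤ h l := by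
    rw [hdef]
    have : l ⬝ᵥ (0 : Fin n → ℝ) ∈ (fun y => l ⬝ᵥ y) '' K := ⟨0, hK0, rfl⟩
    have := le_csSup hbdd this
    simpa using this
  by_cases hlw : l ⬝ᵥ w ≤ 0
  · exact hlw.trans (mul_nonneg hcs0 hh0)
  · push_neg at hlw
    by_cases hhl : h l = 0
    · -- any c feasible: contradiction with hopt
      exfalso
      have := hopt (cstar + 1) l (by linarith) (by rw [hhl]; simpa using hlw.le) hlw
      linarith
    · have hhpos : 0 < h l := lt_of_le_of_ne hh0 (Ne.symm hhl)
      have hfeas := hopt ((l ⬝ᵥ w) / h l) l (le_of_lt (div_pos hlw hhpos))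
        (by rw [div_mul_cancel₀ _ hhl]) hlw
      calc l ⬝ᵥ w = (l ⬝ᵥ w) / h l * h l := (div_mul_cancel₀ _ hhl).symm
        _ ≤ cstar * h l := by
            exact mul_le_mul_of_nonneg_right hfeas hh0
end

section
/- Strong duality: with S*(1) compact convex containing the origin and w ≠ 0 reachable, if (c*, λ*) is an optimal solution of the dual problem (maximize c subject to c·h(λ) ≤ λᵀw, λᵀw > 0), then c* is the optimal value of the primal problem: minimize c subject to w ∈ c·S*(1). -/
open Matrix Pointwise

/-- Theorem 3 (strong duality): if `(c*, λ*)` is an optimal solution of the dual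
problem, then `c*` is the optimal value of the primal problem
`min {c ≥ 0 : w ∈ c·S*(1)}`. -/
theorem strong_duality {n : ℕ} (K : Set (Fin n → ℝ))
    (hKc : IsCompact K) (hKconv : Convex ℝ K) (hK0 : (0 : Fin n → ℝ) ∈ K)
    (w : Fin n → ℝ) (hw : w ≠ 0)
    (c₀ : ℝ) (hc₀ : 0 < c₀) (hreach : w ∈ c₀ • K)
    (h : (Fin n → ℝ) → ℝ) (hdef : ∀ l, h l = sSup ((fun y => l ⬝ᵥ y) '' K))
    (cstar : ℝ) (lstar : Fin n → ℝ)
    (hfeas : 0 ≤ cstar ∧ cstar * h lstar ≤ lstar ⬝ᵥ w ∧ 0 < lstar ⬝ᵥ w)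
    (hopt : ∀ (c : ℝ) (l : Fin n → ℝ),
      0 ≤ c → c * h l ≤ l ⬝ᵥ w → 0 < l ⬝ᵥ w → c ≤ cstar) :
    IsLeast {c : ℝ | 0 ≤ c ∧ w ∈ c • K} cstar := by
  obtain ⟨hc₁, hc₂, hc₃⟩ := hfeas
  -- the set A of scales t with t • w ∈ K
  set A : Set ℝ := {t : ℝ | 0 ≤ t ∧ t • w ∈ K} with hA
  -- A is closed
  have hAclosed : IsClosed A := by
    have : A = {t : ℝ | 0 ≤ t} ∩ (fun t : ℝ => t • w) ⁻¹' K := by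
      ext t; simp [hA, Set.mem_inter_iff]
    rw [this]
    exact (isClosed_le continuous_const continuous_id).inter
      (hKc.isClosed.preimage (continuous_id.smul continuous_const))
  -- A is bounded: contained in an interval
  obtain ⟨R, hR⟩ := hKc.isBounded.exists_norm_le
  have hwpos : 0 < ‖w‖ := norm_pos_iff.mpr hw
  have hAsub : A ⊆ Set.Icc 0 (R / ‖w‖) := by
    rintro t ⟨ht0, htK⟩
    refine ⟨ht0, ?_⟩
    have := hR _ htK
    rw [norm_smul, Real.norm_eq_abs, abs_of_nonneg ht0] at this
    rw [le_div_iff₀ hwpos]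
    exact this
  have hAcomp : IsCompact A := isCompact_Icc.of_isClosed_subset hAclosed hAsub
  -- A is nonempty : c₀⁻¹ ∈ A
  obtain ⟨y₀, hy₀K, hy₀'⟩ := hreach
  have hy₀ : c₀ • y₀ = w := hy₀'
  have hc₀inv : c₀⁻¹ ∈ A := by
    refine ⟨le_of_lt (inv_pos.mpr hc₀), ?_⟩
    have : c₀⁻¹ • w = y₀ := by rw [← hy₀, smul_smul, inv_mul_cancel₀ hc₀.ne', one_smul]
    rwa [this]
  obtain ⟨tmax, htA, htub⟩ := hAcomp.exists_isGreatest ⟨_, hc₀inv⟩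
  have htpos : 0 < tmax := lt_of_lt_of_le (inv_pos.mpr hc₀) (htub hc₀inv)
  set p : ℝ := tmax⁻¹ with hp
  have hppos : 0 < p := inv_pos.mpr htpos
  -- w ∈ p • K
  have hpmem : w ∈ p • K := by
    refine ⟨tmax • w, htA.2, ?_⟩
    show p • (tmax • w) = w
    rw [smul_smul, inv_mul_cancel₀ htpos.ne', one_smul]
  -- p is a lower bound of the primal feasible set
  have hplb : ∀ c : ℝ, 0 ≤ c → w ∈ c • K → p ≤ c := by
    intro c hc0 ⟨y, hyK, hyc'⟩
    have hyc : c • y = w := hyc'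
    have hcne : c ≠ 0 := by
      rintro rfl; rw [zero_smul] at hyc; exact hw hyc.symm
    have hcpos : 0 < c := lt_of_le_of_ne hc0 (Ne.symm hcne)
    have hinvA : c⁻¹ ∈ A := by
      refine ⟨le_of_lt (inv_pos.mpr hcpos), ?_⟩
      have : c⁻¹ • w = y := by rw [← hyc, smul_smul, inv_mul_cancel₀ hcne, one_smul]
      rwa [this]
    have := htub hinvA
    calc p = tmax⁻¹ := rfl
      _ ≤ (c⁻¹)⁻¹ := inv_anti₀ (inv_pos.mpr hcpos) this
      _ = c := inv_inv c
  -- h l bounds dot products over K, and the image is bounded above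
  have hcont : ∀ l : Fin n → ℝ, Continuous fun y : Fin n → ℝ => l ⬝ᵥ y := by
    intro l
    exact continuous_finset_sum _ fun i _ => (continuous_const.mul (continuous_apply i))
  have hbdd : ∀ l : Fin n → ℝ, ∀ y ∈ K, l ⬝ᵥ y ≤ h l := by
    intro l y hyK
    rw [hdef l]
    exact le_csSup ((hKc.image (hcont l)).bddAbove) ⟨y, hyK, rfl⟩
  -- weak duality: cstar ≤ c for every primal feasible c
  have hweak : ∀ c : ℝ, 0 ≤ c → w ∈ c • K → cstar ≤ c := by
    intro c hc0 hmem
    obtain ⟨y, hyK, hyc'⟩ := hmem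
    have hyc : c • y = w := hyc'
    have hcne : c ≠ 0 := by
      rintro rfl; rw [zero_smul] at hyc; exact hw hyc.symm
    have hcpos : 0 < c := lt_of_le_of_ne hc0 (Ne.symm hcne)
    have hdot : lstar ⬝ᵥ w = c * (lstar ⬝ᵥ y) := by
      rw [← hyc]; simp [dotProduct_smul, smul_eq_mul]
    have h1 : lstar ⬝ᵥ w ≤ c * h lstar := by
      rw [hdot]
      exact mul_le_mul_of_nonneg_left (hbdd lstar y hyK) hc0
    have hhl : 0 < h lstar := by
      by_contra hcon
      push_neg at hcon
      have : lstar ⬝ᵥ w ≤ 0 := le_trans h1 (mul_nonpos_of_nonneg_of_nonpos hc0 hcon)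
      linarith
    have : cstar * h lstar ≤ c * h lstar := le_trans hc₂ h1
    exact le_of_mul_le_mul_right this hhl
  -- strong duality: p ≤ cstar
  have hstrong : p ≤ cstar := by
    refine le_of_forall_pos_le_add fun ε hε => ?_
    rw [← sub_le_iff_le_add]
    rcases le_or_gt p ε with hpe | hpe
    · linarith
    set c : ℝ := p - ε with hc
    have hcpos : 0 < c := by simp [hc]; linarith
    have hnot : w ∉ c • K := by
      intro hmem
      have := hplb c hcpos.le hmem
      linarith
    have hsconv : Convex ℝ (c • K) := hKconv.smul c
    have hsclosed : IsClosed (c • K) := (hKc.smul c).isClosed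
    obtain ⟨f, u, hfu, huw⟩ := geometric_hahn_banach_closed_point hsconv hsclosed hnot
    set l : Fin n → ℝ := fun i => f fun j => if i = j then 1 else 0 with hl
    have hfl : ∀ x : Fin n → ℝ, l ⬝ᵥ x = f x := by
      intro x
      have hx := LinearMap.pi_apply_eq_sum_univ (f : (Fin n → ℝ) →ₗ[ℝ] ℝ) x
      simp only [ContinuousLinearMap.coe_coe] at hx
      rw [hx]
      simp [dotProduct, hl, mul_comm]
    have h0mem : (0 : Fin n → ℝ) ∈ c • K := by
      have := Set.smul_mem_smul_set (a := c) hK0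
      rwa [smul_zero] at this
    have hu0 : 0 < u := by
      have := hfu 0 h0mem
      rwa [map_zero] at this
    have hlw : 0 < l ⬝ᵥ w := by
      rw [hfl]
      exact lt_trans hu0 huw
    have hfeas' : c * h l ≤ l ⬝ᵥ w := by
      have hK_ne : ((fun y => l ⬝ᵥ y) '' K).Nonempty := ⟨l ⬝ᵥ 0, 0, hK0, rfl⟩
      have hub : ∀ y ∈ K, l ⬝ᵥ y ≤ (l ⬝ᵥ w) / c := by
        intro y hyK
        have hmem : c • y ∈ c • K := Set.smul_mem_smul_set hyK
        have := lt_trans (hfu _ hmem) huw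
        rw [← hfl (c • y), ← hfl w] at this
        have hcy : l ⬝ᵥ (c • y) = c * (l ⬝ᵥ y) := by
          simp [dotProduct_smul, smul_eq_mul]
        rw [hcy] at this
        rw [le_div_iff₀ hcpos, mul_comm]
        exact this.le
      have : h l ≤ (l ⬝ᵥ w) / c := by
        rw [hdef l]
        exact csSup_le hK_ne (by rintro _ ⟨y, hyK, rfl⟩; exact hub y hyK)
      calc c * h l ≤ c * ((l ⬝ᵥ w) / c) := mul_le_mul_of_nonneg_left this hcpos.le
        _ = l ⬝ᵥ w := by field_simp
    have := hopt c l hcpos.le hfeas' hlw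
    simpa [hc] using this
  have hcp : cstar = p := le_antisymm (hweak p hppos.le hpmem) hstrong
  constructor
  · exact ⟨hc₁, by rw [hcp]; exact hpmem⟩
  · rintro c ⟨hc0, hmem⟩
    exact hweak c hc0 hmem
end

section
/- Optimality condition on impulse times (necessity): suppose w = Σ_{k} Γ(t_k) u_k with Σ_k f(u_k) = c* where c* = λ*ᵀw / h(λ*) is the optimal cost, h(λ) = max_{t ∈ T} max_{u ∈ U(1)} λᵀΓ(t)u, and λ*ᵀw > 0. Then each impulse with u_k ≠ 0 satisfies max_{u ∈ U(1)} λ*ᵀΓ(t_k)u = h(λ*). -/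
open Matrix

/-- Necessary optimality condition on impulse times: if a sequence of impulses reaches
`w` with total cost equal to the optimal cost `c* = λ*ᵀw / h(λ*)`, then every nonzero
impulse is applied at a time where `max_{u ∈ U(1)} λ*ᵀΓ(t)u` attains `h(λ*)`. -/
theorem optimal_impulse_times {n m : ℕ} (T : Set ℝ) (hT : IsCompact T)
    (Γ : ℝ → Matrix (Fin n) (Fin m) ℝ) (hΓ : ContinuousOn Γ T)
    (C : Set (Fin m → ℝ)) (hC0 : (0 : Fin m → ℝ) ∈ C)
    (hcone : ∀ u ∈ C, ∀ α : ℝ, 0 ≤ α → α • u ∈ C)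
    (f : (Fin m → ℝ) → ℝ)
    (hhom : ∀ u ∈ C, ∀ α : ℝ, 0 ≤ α → f (α • u) = α * f u)
    (hnonneg : ∀ u ∈ C, 0 ≤ f u)
    (hdefin : ∀ u ∈ C, f u = 0 → u = 0)
    (U : Set (Fin m → ℝ)) (hU : U = {u | u ∈ C ∧ f u ≤ 1})
    (hUc : IsCompact U) (hUconv : Convex ℝ U)
    (l w : Fin n → ℝ) (hlw : 0 < l ⬝ᵥ w)
    (hval : ℝ) (hvalpos : 0 < hval)
    (hh : IsGreatest {x : ℝ | ∃ t ∈ T, ∃ u ∈ U, x = l ⬝ᵥ (Γ t).mulVec u} hval)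
    (K : ℕ) (t : Fin K → ℝ) (u : Fin K → (Fin m → ℝ))
    (ht : ∀ k, t k ∈ T) (hu : ∀ k, u k ∈ C)
    (hreach : (∑ k, (Γ (t k)).mulVec (u k)) = w)
    (hcost : (∑ k, f (u k)) = (l ⬝ᵥ w) / hval) :
    ∀ k, u k ≠ 0 →
      IsGreatest {x : ℝ | ∃ u' ∈ U, x = l ⬝ᵥ (Γ (t k)).mulVec u'} hval := by
  intro k hk
  have hf0 : f 0 = 0 := by
    have := hhom 0 hC0 0 le_rfl
    simpa using this
  have hfpos : ∀ j : Fin K, u j ≠ 0 → 0 < f (u j) := by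
    intro j hj
    rcases lt_or_eq_of_le (hnonneg _ (hu j)) with h | h
    · exact h
    · exact absurd (hdefin _ (hu j) h.symm) hj
  have hnorm : ∀ j : Fin K, u j ≠ 0 → (f (u j))⁻¹ • u j ∈ U := by
    intro j hj
    have hp := hfpos j hj
    rw [hU]
    refine ⟨hcone _ (hu j) _ (inv_nonneg.2 hp.le), ?_⟩
    rw [hhom _ (hu j) _ (inv_nonneg.2 hp.le), inv_mul_cancel₀ hp.ne']
  -- key bound
  have key : ∀ j : Fin K, l ⬝ᵥ (Γ (t j)).mulVec (u j) ≤ hval * f (u j) := by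
    intro j
    rcases eq_or_ne (u j) 0 with h0 | h0
    · simp [h0, hf0]
    · have hp := hfpos j h0
      have hmem : (f (u j))⁻¹ * (l ⬝ᵥ (Γ (t j)).mulVec (u j)) ∈
          {x : ℝ | ∃ t' ∈ T, ∃ u' ∈ U, x = l ⬝ᵥ (Γ t').mulVec u'} := by
        refine ⟨t j, ht j, (f (u j))⁻¹ • u j, hnorm j h0, ?_⟩
        rw [mulVec_smul, dotProduct_smul, smul_eq_mul]
      have := hh.2 hmem
      calc l ⬝ᵥ (Γ (t j)).mulVec (u j)
          = f (u j) * ((f (u j))⁻¹ * (l ⬝ᵥ (Γ (t j)).mulVec (u j))) := by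
            field_simp
        _ ≤ f (u j) * hval := by exact mul_le_mul_of_nonneg_left this hp.le
        _ = hval * f (u j) := mul_comm _ _
  have hsum : (∑ j, l ⬝ᵥ (Γ (t j)).mulVec (u j)) = l ⬝ᵥ w := by
    simp only [← hreach, dotProduct, Finset.sum_apply, Finset.mul_sum]
    exact Finset.sum_comm

  have hsum' : (∑ j, hval * f (u j)) = l ⬝ᵥ w := by
    rw [← Finset.mul_sum, hcost, mul_div_cancel₀ _ hvalpos.ne']
  have heq : l ⬝ᵥ (Γ (t k)).mulVec (u k) = hval * f (u k) := by
    by_contra hne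
    have hlt : l ⬝ᵥ (Γ (t k)).mulVec (u k) < hval * f (u k) := lt_of_le_of_ne (key k) hne
    have : (∑ j, l ⬝ᵥ (Γ (t j)).mulVec (u j)) < ∑ j, hval * f (u j) :=
      Finset.sum_lt_sum (fun j _ => key j) ⟨k, Finset.mem_univ k, hlt⟩
    rw [hsum, hsum'] at this
    exact lt_irrefl _ this
  have hp := hfpos k hk
  constructor
  · refine ⟨(f (u k))⁻¹ • u k, hnorm k hk, ?_⟩
    rw [mulVec_smul, dotProduct_smul, smul_eq_mul, heq]
    field_simp
  · rintro x ⟨u', hu', rfl⟩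
    exact hh.2 ⟨t k, ht k, u', hu', rfl⟩
end

section
/- Optimality condition on impulse directions (necessity): under the same setup, each applied nonzero impulse satisfies u_k = α_k û_k with α_k = f(u_k) > 0 and λ*ᵀΓ(t_k)û_k = max_{u ∈ U(1)} λ*ᵀΓ(t_k)u; i.e., every optimal impulse direction maximizes λ*ᵀΓ(t_k)u over the unit cost set. -/
open Matrix

/-- Necessary optimality condition on impulse directions: in an optimal impulse
sequence, every nonzero impulse is a positive multiple `α_k·û_k` (with `α_k = f(u_k)`)
of a direction `û_k ∈ U(1)` that maximizes `λ*ᵀΓ(t_k)u` over the unit-cost set. -/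
theorem optimal_impulse_directions {n m : ℕ} (T : Set ℝ) (hT : IsCompact T)
    (Γ : ℝ → Matrix (Fin n) (Fin m) ℝ) (hΓ : ContinuousOn Γ T)
    (C : Set (Fin m → ℝ)) (hC0 : (0 : Fin m → ℝ) ∈ C)
    (hcone : ∀ u ∈ C, ∀ α : ℝ, 0 ≤ α → α • u ∈ C)
    (f : (Fin m → ℝ) → ℝ)
    (hhom : ∀ u ∈ C, ∀ α : ℝ, 0 ≤ α → f (α • u) = α * f u)
    (hnonneg : ∀ u ∈ C, 0 ≤ f u)
    (hdefin : ∀ u ∈ C, f u = 0 → u = 0)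
    (U : Set (Fin m → ℝ)) (hU : U = {u | u ∈ C ∧ f u ≤ 1})
    (hUc : IsCompact U) (hUconv : Convex ℝ U)
    (l w : Fin n → ℝ) (hlw : 0 < l ⬝ᵥ w)
    (hval : ℝ) (hvalpos : 0 < hval)
    (hh : IsGreatest {x : ℝ | ∃ t ∈ T, ∃ u ∈ U, x = l ⬝ᵥ (Γ t).mulVec u} hval)
    (K : ℕ) (t : Fin K → ℝ) (u : Fin K → (Fin m → ℝ))
    (ht : ∀ k, t k ∈ T) (hu : ∀ k, u k ∈ C)
    (hreach : (∑ k, (Γ (t k)).mulVec (u k)) = w)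
    (hcost : (∑ k, f (u k)) = (l ⬝ᵥ w) / hval) :
    ∀ k, u k ≠ 0 → ∃ (α : ℝ) (uhat : Fin m → ℝ),
      0 < α ∧ α = f (u k) ∧ uhat ∈ U ∧ u k = α • uhat ∧
      IsGreatest {x : ℝ | ∃ u' ∈ U, x = l ⬝ᵥ (Γ (t k)).mulVec u'}
        (l ⬝ᵥ (Γ (t k)).mulVec uhat) := by
  have hf0 : f 0 = 0 := by
    have := hhom 0 hC0 0 le_rfl
    simpa using this
  have hfpos : ∀ j : Fin K, u j ≠ 0 → 0 < f (u j) := by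
    intro j h0
    exact lt_of_le_of_ne (hnonneg _ (hu j))
      (fun h => h0 (hdefin _ (hu j) h.symm))
  have hmemU : ∀ j : Fin K, u j ≠ 0 → (f (u j))⁻¹ • u j ∈ U := by
    intro j h0
    have hp := hfpos j h0
    have hC : (f (u j))⁻¹ • u j ∈ C := hcone _ (hu j) _ (inv_nonneg.mpr hp.le)
    have hf1 : f ((f (u j))⁻¹ • u j) = 1 := by
      rw [hhom _ (hu j) _ (inv_nonneg.mpr hp.le), inv_mul_cancel₀ hp.ne']
    rw [hU]; exact ⟨hC, le_of_eq hf1⟩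
  have hrewrite : ∀ j : Fin K, u j ≠ 0 →
      l ⬝ᵥ (Γ (t j)).mulVec (u j)
        = f (u j) * (l ⬝ᵥ (Γ (t j)).mulVec ((f (u j))⁻¹ • u j)) := by
    intro j h0
    rw [Matrix.mulVec_smul, dotProduct_smul, smul_eq_mul, ← mul_assoc,
      mul_inv_cancel₀ (hfpos j h0).ne', one_mul]
  have key : ∀ j : Fin K, l ⬝ᵥ (Γ (t j)).mulVec (u j) ≤ f (u j) * hval := by
    intro j
    by_cases h0 : u j = 0
    · simp [h0, hf0]
    · rw [hrewrite j h0]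
      exact mul_le_mul_of_nonneg_left
        (hh.2 ⟨t j, ht j, _, hmemU j h0, rfl⟩) (hfpos j h0).le
  have hsumdot : ∑ j, l ⬝ᵥ (Γ (t j)).mulVec (u j) = l ⬝ᵥ w := by
    rw [← hreach]
    simp only [dotProduct, Finset.sum_apply, Finset.mul_sum]
    exact Finset.sum_comm
  have hsum : ∑ j, (f (u j) * hval - l ⬝ᵥ (Γ (t j)).mulVec (u j)) = 0 := by
    rw [Finset.sum_sub_distrib, ← Finset.sum_mul, hcost, hsumdot,
      div_mul_cancel₀ _ hvalpos.ne', sub_self]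
  have heach := (Finset.sum_eq_zero_iff_of_nonneg
    (fun j _ => sub_nonneg.mpr (key j))).mp hsum
  intro k hk
  have hp := hfpos k hk
  have heq : l ⬝ᵥ (Γ (t k)).mulVec (u k) = f (u k) * hval := by
    have := heach k (Finset.mem_univ k)
    linarith [this]
  have hmax : l ⬝ᵥ (Γ (t k)).mulVec ((f (u k))⁻¹ • u k) = hval := by
    have := hrewrite k hk
    rw [heq] at this
    exact (mul_left_cancel₀ hp.ne' this.symm)
  refine ⟨f (u k), (f (u k))⁻¹ • u k, hp, rfl, hmemU k hk,
    (smul_inv_smul₀ hp.ne' _).symm, ⟨⟨_, hmemU k hk, rfl⟩, ?_⟩⟩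
  rintro x ⟨u', hu', rfl⟩
  rw [hmax]
  exact hh.2 ⟨t k, ht k, u', hu', rfl⟩
end

section
/- Sufficiency of the optimality conditions: let λ* ∈ ℝ^n with λ*ᵀw > 0 satisfy c*·h(λ*) = λ*ᵀw where c* is the minimal cost to reach w and h(λ) = max_{t∈T} max_{u∈U(1)} λᵀΓ(t)u. If impulses (t_k, u_k) satisfy (1) Σ_k Γ(t_k)u_k = w, (2) each u_k = α_k û_k with α_k ≥ 0, û_k ∈ argmax_{u ∈ U(1)} λ*ᵀΓ(t_k)u, and (3) max_{u∈U(1)} λ*ᵀΓ(t_k)u = h(λ*) whenever α_k > 0, then Σ_k f(u_k) = c*, i.e., the sequence is optimal. -/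
open Matrix

/-- Sufficiency of the optimality conditions: an impulse sequence reaching `w` whose
impulses are nonnegative multiples of argmax directions, applied only at times where
the per-time maximum attains `h(λ*)`, has total cost equal to the minimum cost `c*`. -/
theorem optimality_conditions_sufficient {n m : ℕ} (T : Set ℝ) (hT : IsCompact T)
    (Γ : ℝ → Matrix (Fin n) (Fin m) ℝ) (hΓ : ContinuousOn Γ T)
    (C : Set (Fin m → ℝ)) (hC0 : (0 : Fin m → ℝ) ∈ C)
    (hcone : ∀ u ∈ C, ∀ α : ℝ, 0 ≤ α → α • u ∈ C)
    (f : (Fin m → ℝ) → ℝ)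
    (hhom : ∀ u ∈ C, ∀ α : ℝ, 0 ≤ α → f (α • u) = α * f u)
    (hnonneg : ∀ u ∈ C, 0 ≤ f u)
    (U : Set (Fin m → ℝ)) (hU : U = {u | u ∈ C ∧ f u ≤ 1})
    (hUc : IsCompact U) (hUconv : Convex ℝ U)
    (l w : Fin n → ℝ) (hlw : 0 < l ⬝ᵥ w)
    (hval : ℝ) (hvalpos : 0 < hval)
    (hh : IsGreatest {x : ℝ | ∃ t ∈ T, ∃ u ∈ U, x = l ⬝ᵥ (Γ t).mulVec u} hval)
    (cstar : ℝ)
    (hcstar : IsLeast {c : ℝ | ∃ (K : ℕ) (t : Fin K → ℝ) (u : Fin K → (Fin m → ℝ)),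
      (∀ k, t k ∈ T ∧ u k ∈ C) ∧ (∑ k, (Γ (t k)).mulVec (u k)) = w ∧
      c = ∑ k, f (u k)} cstar)
    (hactive : cstar * hval = l ⬝ᵥ w)
    (K : ℕ) (t : Fin K → ℝ) (u : Fin K → (Fin m → ℝ))
    (α : Fin K → ℝ) (uhat : Fin K → (Fin m → ℝ))
    (ht : ∀ k, t k ∈ T)
    (hα : ∀ k, 0 ≤ α k) (huhat : ∀ k, uhat k ∈ U)
    (hdir : ∀ k, u k = α k • uhat k)
    (hargmax : ∀ k, IsGreatest {x : ℝ | ∃ u' ∈ U, x = l ⬝ᵥ (Γ (t k)).mulVec u'}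
      (l ⬝ᵥ (Γ (t k)).mulVec (uhat k)))
    (htime : ∀ k, 0 < α k → l ⬝ᵥ (Γ (t k)).mulVec (uhat k) = hval)
    (hreach : (∑ k, (Γ (t k)).mulVec (u k)) = w) :
    (∑ k, f (u k)) = cstar := by
  have hCU : ∀ k, uhat k ∈ C ∧ f (uhat k) ≤ 1 := by
    intro k; have := huhat k; rw [hU] at this; exact this
  have huC : ∀ k, u k ∈ C := by
    intro k; rw [hdir k]; exact hcone _ (hCU k).1 _ (hα k)
  have hle : cstar ≤ ∑ k, f (u k) :=
    hcstar.2 ⟨K, t, u, fun k => ⟨ht k, huC k⟩, hreach, rfl⟩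
  -- sum of α equals cstar
  have hterm : ∀ k, l ⬝ᵥ (Γ (t k)).mulVec (u k) = α k * hval := by
    intro k
    rw [hdir k, Matrix.mulVec_smul, dotProduct_smul, smul_eq_mul]
    rcases eq_or_lt_of_le (hα k) with h0 | hpos
    · rw [← h0]; ring
    · rw [htime k hpos]
  have hsum : (∑ k, α k) * hval = l ⬝ᵥ w := by
    have hdot : l ⬝ᵥ (∑ k, (Γ (t k)).mulVec (u k)) = ∑ k, l ⬝ᵥ (Γ (t k)).mulVec (u k) := by
      simp only [dotProduct, Finset.sum_apply, Finset.mul_sum]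
      exact Finset.sum_comm
    rw [← hreach, hdot, Finset.sum_mul]
    exact (Finset.sum_congr rfl fun k _ => (hterm k).symm)
  have hαsum : ∑ k, α k = cstar := by
    have := hsum.trans hactive.symm
    exact mul_right_cancel₀ (ne_of_gt hvalpos) this
  have hge : ∑ k, f (u k) ≤ cstar := by
    rw [← hαsum]
    refine Finset.sum_le_sum fun k _ => ?_
    rw [hdir k, hhom _ (hCU k).1 _ (hα k)]
    calc α k * f (uhat k) ≤ α k * 1 := by
          exact mul_le_mul_of_nonneg_left (hCU k).2 (hα k)
      _ = α k := mul_one _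
  linarith
end
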